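/- Let Ω be an m×m complex matrix and let T and α be complex scalars. Consider the 2m×2m block matrix A_e1 = [[I_m + TΩ, I_m], [−((1−α)I_m + TΩ)(I_m + TΩ), −((1−α)I_m + TΩ)]]. Then the characteristic polynomial of A_e1 equals X^m (X − α)^m; in particular, the spectrum of A_e1 is contained in {0, α}. -/
import Mathlib

open Polynomial Matrix

private lemma det_aux {n R : Type*} [DecidableEq n] [Fintype n] [CommRing R]
    (P S Q D : Matrix n n R) (h : S * P + Q = D) :
    (fromBlocks P (-1) Q S).det = D.det := by
  have e1 : (fromBlocks 1 0 S 1 : Matrix (n ⊕ n) (n ⊕ n) R) * fromBlocks P (-1) Q S *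
      fromBlocks 1 0 P 1 =
      fromBlocks 1 0 0 D *
        (fromBlocks 1 (-1) 0 1 * fromBlocks 1 0 1 1 * fromBlocks 1 (-1) 0 1) := by
    subst h
    ext (i | i) (j | j) <;>
      simp [fromBlocks_multiply, Matrix.mul_add, Matrix.add_mul]
  have e2 := congrArg Matrix.det e1
  simp [det_mul, det_fromBlocks_zero₂₁, det_fromBlocks_zero₁₂] at e2
  exact e2

private lemma charpoly_part {m : ℕ} (Ω : Matrix (Fin m) (Fin m) ℂ) (T α : ℂ) :
    (Matrix.fromBlocks
        (1 + T • Ω) 1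
        (-(((1 - α) • 1 + T • Ω) * (1 + T • Ω))) (-((1 - α) • (1 : Matrix (Fin m) (Fin m) ℂ) + T • Ω))).charpoly
      = X ^ m * (X - C α) ^ m := by
  classical
  rw [Matrix.charpoly, charmatrix_fromBlocks]
  have h12 : -((1 : Matrix (Fin m) (Fin m) ℂ).map (C : ℂ → ℂ[X])) =
      (-1 : Matrix (Fin m) (Fin m) ℂ[X]) := by
    rw [show ((1 : Matrix (Fin m) (Fin m) ℂ).map (C : ℂ → ℂ[X])) =
      (C : ℂ →+* ℂ[X]).mapMatrix 1 from rfl, _root_.map_one]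
  set B₀ : Matrix (Fin m) (Fin m) ℂ := 1 + T • Ω with hB
  set C₀ : Matrix (Fin m) (Fin m) ℂ := (1 - α) • 1 + T • Ω with hC
  have h21 : -((-(C₀ * B₀)).map (C : ℂ → ℂ[X])) =
      (C : ℂ →+* ℂ[X]).mapMatrix C₀ * (C : ℂ →+* ℂ[X]).mapMatrix B₀ := by
    rw [show ((-(C₀ * B₀)).map (C : ℂ → ℂ[X])) =
      (C : ℂ →+* ℂ[X]).mapMatrix (-(C₀ * B₀)) from rfl, _root_.map_neg, _root_.map_mul, neg_neg]
  rw [h12, h21]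
  rw [det_aux _ _ _ (Matrix.scalar (Fin m) (X * (X - C α))) ?_]
  · rw [Matrix.scalar_apply, Matrix.det_diagonal, Finset.prod_const, Finset.card_univ,
      Fintype.card_fin, mul_pow]
  · -- S * P + Q = D
    have hsc : charmatrix (-C₀) =
        Matrix.scalar (Fin m) (X : ℂ[X]) + (C : ℂ →+* ℂ[X]).mapMatrix C₀ := by
      rw [charmatrix, _root_.map_neg, sub_neg_eq_add]
    have hscB : charmatrix B₀ =
        Matrix.scalar (Fin m) (X : ℂ[X]) - (C : ℂ →+* ℂ[X]).mapMatrix B₀ := rfl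
    rw [hsc, hscB]
    generalize hb : (C : ℂ →+* ℂ[X]).mapMatrix B₀ = b
    generalize hc : (C : ℂ →+* ℂ[X]).mapMatrix C₀ = c
    have hcb : c - b = Matrix.scalar (Fin m) (-(C α)) := by
      rw [← hb, ← hc, ← _root_.map_sub]
      have h1 : C₀ - B₀ = (-α) • (1 : Matrix (Fin m) (Fin m) ℂ) := by
        rw [hB, hC]
        module
      rw [h1]
      ext i j
      by_cases h : i = j <;>
        simp [RingHom.mapMatrix_apply, Matrix.map_apply, Matrix.smul_apply, Matrix.one_apply,
          Matrix.scalar_apply, Matrix.diagonal_apply, h]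
    have hcomm : ∀ M : Matrix (Fin m) (Fin m) ℂ[X],
        Matrix.scalar (Fin m) (X : ℂ[X]) * M = M * Matrix.scalar (Fin m) (X : ℂ[X]) :=
      fun M => (Matrix.scalar_commute (X : ℂ[X]) (fun r => Commute.all _ _) M).eq
    calc (Matrix.scalar (Fin m) (X : ℂ[X]) + c) * (Matrix.scalar (Fin m) (X : ℂ[X]) - b) + c * b
        = Matrix.scalar (Fin m) (X : ℂ[X]) * Matrix.scalar (Fin m) (X : ℂ[X])
            + Matrix.scalar (Fin m) (X : ℂ[X]) * (c - b) := by
          rw [Matrix.add_mul, Matrix.mul_sub, Matrix.mul_sub, ← hcomm c, Matrix.mul_sub]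
          noncomm_ring
      _ = Matrix.scalar (Fin m) (X * (X - C α)) := by
          rw [hcb, ← _root_.map_mul, ← _root_.map_mul, ← _root_.map_add]
          congr 1
          ring

/-- For an `m×m` complex matrix `Ω` and scalars `T, α`, the `2m×2m`
block matrix
`A_e1 = [[I + TΩ, I], [−((1−α)I + TΩ)(I + TΩ), −((1−α)I + TΩ)]]`
has characteristic polynomial `X^m (X − α)^m`; in particular its spectrum is
contained in `{0, α}`. -/
theorem charpoly_Ae1
    {m : ℕ} (Ω : Matrix (Fin m) (Fin m) ℂ) (T α : ℂ) :
    (Matrix.fromBlocks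
        (1 + T • Ω) 1
        (-(((1 - α) • 1 + T • Ω) * (1 + T • Ω))) (-((1 - α) • (1 : Matrix (Fin m) (Fin m) ℂ) + T • Ω))).charpoly
      = X ^ m * (X - C α) ^ m ∧
    spectrum ℂ (Matrix.fromBlocks
        (1 + T • Ω) 1
        (-(((1 - α) • 1 + T • Ω) * (1 + T • Ω))) (-((1 - α) • (1 : Matrix (Fin m) (Fin m) ℂ) + T • Ω)))
      ⊆ {0, α} := by
  refine ⟨charpoly_part Ω T α, ?_⟩
  set A := Matrix.fromBlocks
        (1 + T • Ω) 1
        (-(((1 - α) • 1 + T • Ω) * (1 + T • Ω)))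
        (-((1 - α) • (1 : Matrix (Fin m) (Fin m) ℂ) + T • Ω)) with hA
  intro μ hμ
  rcases Nat.eq_zero_or_pos m with hm | hm
  · subst hm
    exact absurd (isUnit_of_subsingleton _) (spectrum.mem_iff.mp hμ)
  · haveI : Nonempty (Fin m) := ⟨⟨0, hm⟩⟩
    have h0 : (aeval A) A.charpoly = 0 := Matrix.aeval_self_charpoly A
    have hsub := spectrum.subset_polynomial_aeval A A.charpoly ⟨μ, hμ, rfl⟩
    rw [h0, spectrum.zero_eq] at hsub
    have hev : eval μ A.charpoly = 0 := hsub
    rw [charpoly_part Ω T α] at hev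
    simp only [eval_mul, eval_pow, eval_sub, eval_X, eval_C] at hev
    rcases mul_eq_zero.mp hev with h | h
    · left
      exact pow_eq_zero_iff hm.ne' |>.mp h
    · right
      have := pow_eq_zero_iff hm.ne' |>.mp h
      exact sub_eq_zero.mp this
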